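/- In the pentagon with dist(A,E) = dist(B,E) = dist(B,F) = dist(C,F) = 1 and angles α = ∠EAB = ∠EBA, γ = ∠BEF = ∠BFE arranged so that ∠EBF = π − 2γ, the diagonal satisfies dist(A,F)² = 1 + 4cos²(α) + 4cos(α)cos(α + 2γ). -/

import Mathlib

open Real EuclideanGeometry

noncomputable section

local notation "E2" => EuclideanSpace ℝ (Fin 2)

instance : Fact (Module.finrank ℝ (EuclideanSpace ℝ (Fin 2)) = 2) :=
  ⟨finrank_euclideanSpace_fin⟩

instance : Module.Oriented ℝ (EuclideanSpace ℝ (Fin 2)) (Fin 2) :=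
  ⟨(EuclideanSpace.basisFun (Fin 2) ℝ).toBasis.orientation⟩

/-- Affine basis of the plane from three non-collinear points. -/
noncomputable def triBasis {p q r : E2} (h : ¬ Collinear ℝ ({p, q, r} : Set E2)) :
    AffineBasis (Fin 3) ℝ E2 where
  toFun := ![p, q, r]
  ind' := affineIndependent_iff_not_collinear_set.mpr h
  tot' := by
    rw [(affineIndependent_iff_not_collinear_set.mpr
      h).affineSpan_eq_top_iff_card_eq_finrank_add_one]
    simp [finrank_euclideanSpace_fin]

lemma exists_triBasis {p q r : E2} (h : ¬ Collinear ℝ ({p, q, r} : Set E2)) :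
    ∃ b : AffineBasis (Fin 3) ℝ E2, ⇑b = ![p, q, r] :=
  ⟨triBasis h, rfl⟩

variable {b : AffineBasis (Fin 3) ℝ (EuclideanSpace ℝ (Fin 2))} {p q r : E2}

lemma basis_range (hb : ⇑b = ![p, q, r]) :
    Set.range ⇑b = ({p, q, r} : Set E2) := by
  rw [hb]
  simp_rw [Matrix.range_cons, Matrix.range_empty, Set.singleton_union, insert_empty_eq]

lemma basis_coord (hb : ⇑b = ![p, q, r]) (i j : Fin 3) :
    b.coord i ((![p, q, r]) j) = if i = j then 1 else 0 := by
  rw [show (![p, q, r]) j = b j from (congrFun hb j).symm, AffineBasis.coord_apply]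

lemma mem_interior_of_coords (hb : ⇑b = ![p, q, r])
    {x : E2} (hx : ∀ i, 0 < b.coord i x)
    {S : Set E2} (hS : ({p, q, r} : Set E2) ⊆ S) :
    x ∈ interior (convexHull ℝ S) := by
  refine interior_mono (convexHull_mono hS) ?_
  rw [← basis_range hb, b.interior_convexHull]
  exact hx

lemma coords_of_combo (hb : ⇑b = ![p, q, r])
    {a c d : ℝ} (habc : a + c + d = 1) (i : Fin 3) :
    b.coord i (a • p + c • q + d • r) = ![a, c, d] i := by
  have hw : ∑ j, (![a, c, d]) j = 1 := by
    simp [Fin.sum_univ_three]; linarith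
  have hcombo : (Finset.univ.affineCombination ℝ ⇑b ![a, c, d])
      = a • p + c • q + d • r := by
    rw [Finset.univ.affineCombination_eq_linear_combination _ _ hw]
    simp [hb, Fin.sum_univ_three]
  rw [← hcombo, b.coord_apply_combination_of_mem (Finset.mem_univ i) hw]

lemma coord_zero_iff_mem (hb : ⇑b = ![p, q, r]) (x : E2) :
    b.coord 0 x = 0 ↔ x ∈ line[ℝ, q, r] := by
  constructor
  · intro h0
    have hsum := b.sum_coord_apply_eq_one x
    have hself := b.affineCombination_coord_eq_self x
    rw [Finset.univ.affineCombination_eq_linear_combination _ _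
      (b.sum_coord_apply_eq_one x)] at hself
    rw [Fin.sum_univ_three] at hsum
    rw [Fin.sum_univ_three] at hself
    have h1 : b 0 = p := congrFun hb 0
    have h2 : b 1 = q := congrFun hb 1
    have h3 : b 2 = r := congrFun hb 2
    rw [h1, h2, h3, h0, zero_smul, zero_add] at hself
    rw [h0, zero_add] at hsum
    set c1 := b.coord 1 x with hc1
    set c2 := b.coord 2 x with hc2
    have hx : x = AffineMap.lineMap q r c2 := by
      rw [AffineMap.lineMap_apply_module, show (1 : ℝ) - c2 = c1 by linarith]
      exact hself.symm
    rw [hx]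
    exact AffineMap.lineMap_mem_affineSpan_pair _ _ _
  · intro hx
    have hx' : (x -ᵥ q) +ᵥ q ∈ line[ℝ, q, r] := by rwa [vsub_vadd]
    obtain ⟨t, ht⟩ := vadd_left_mem_affineSpan_pair.mp hx'
    have hxx : x = t • (r -ᵥ q) +ᵥ q := by rw [ht, vsub_vadd]
    have hcq : b.coord 0 q = 0 := by simpa using basis_coord hb 0 1
    have hcr : b.coord 0 r = 0 := by simpa using basis_coord hb 0 2
    rw [hxx, AffineMap.map_vadd, LinearMap.map_smul, AffineMap.linearMap_vsub, hcq, hcr]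
    simp

set_option maxHeartbeats 2000000 in
theorem pentagon_diagonal_formula (α γ : ℝ) (A B E F : E2) (Q : Set E2)
    (hQ : Q = convexHull ℝ ({A, B, E, F} : Set E2))
    (hAB : segment ℝ A B ⊆ frontier Q)
    (hBE : segment ℝ B E ⊆ frontier Q)
    (hEF : segment ℝ E F ⊆ frontier Q)
    (hFA : segment ℝ F A ⊆ frontier Q)
    (hAE : dist A E = 1) (hBEd : dist B E = 1) (hBF : dist B F = 1)
    (h1 : ∠ E A B = α) (h2 : ∠ E B A = α)
    (h3 : ∠ B E F = γ) (h4 : ∠ B F E = γ)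
    (h5 : ∠ E B F = π - 2 * γ) :
    dist A F ^ 2 = 1 + 4 * Real.cos α ^ 2 + 4 * Real.cos α * Real.cos (α + 2 * γ) := by
  subst hQ
  -- basic nondegeneracies
  have hBneE : B ≠ E := by
    intro hh; rw [hh, dist_self] at hBEd; norm_num at hBEd
  have hFneB : F ≠ B := by
    intro hh; rw [hh, dist_self] at hBF; norm_num at hBF
  -- Case A = B
  by_cases hABeq : A = B
  · subst hABeq
    have hα : α = π / 2 := by
      rw [EuclideanGeometry.angle_self_right] at h2; exact h2.symm
    have hdaf : dist A F = 1 := hBF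
    rw [hdaf, hα, Real.cos_pi_div_two]
    ring
  -- d = |AB| facts
  have hlc := EuclideanGeometry.law_cos E A B
  rw [dist_comm E B, hBEd, dist_comm E A, hAE, h1, dist_comm B A] at hlc
  have hd2 : dist A B * dist A B = 2 * dist A B * Real.cos α := by nlinarith [hlc]
  have hdAB : dist A B = 2 * Real.cos α := by
    have hne : dist A B ≠ 0 := dist_ne_zero.2 hABeq
    exact mul_left_cancel₀ hne (by rw [hd2]; ring)
  by_cases hFL : F ∈ line[ℝ, B, E]
  · -- F on line BE
    have hF' : (F -ᵥ B) +ᵥ B ∈ line[ℝ, B, E] := by rwa [vsub_vadd]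
    obtain ⟨t, ht⟩ := vadd_left_mem_affineSpan_pair.mp hF'
    have hnormEB : ‖E -ᵥ B‖ = 1 := by
      have h' : dist E B = 1 := by rw [dist_comm]; exact hBEd
      rwa [dist_eq_norm_vsub (EuclideanSpace ℝ (Fin 2))] at h'
    have hnormFB : ‖F -ᵥ B‖ = 1 := by
      have h' : dist F B = 1 := by rw [dist_comm]; exact hBF
      rwa [dist_eq_norm_vsub (EuclideanSpace ℝ (Fin 2))] at h'
    have habs : |t| = 1 := by
      have : ‖t • (E -ᵥ B)‖ = 1 := by rw [ht]; exact hnormFB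
      rwa [norm_smul, hnormEB, mul_one, Real.norm_eq_abs] at this
    rcases abs_eq (by norm_num : (0:ℝ) ≤ 1) |>.mp habs with ht1 | ht1
    · -- t = 1 : F = E
      have hFE : E = F := by
        rw [ht1, one_smul] at ht
        exact vsub_left_cancel ht
      subst hFE
      have hγ : γ = π / 2 := by
        rw [EuclideanGeometry.angle_self_right] at h3; exact h3.symm
      have hdaf : dist A E = 1 := hAE
      rw [hdaf, hγ, show α + 2 * (π / 2) = α + π by ring, Real.cos_add_pi]
      ring
    · -- t = -1 : F = 2B - E
      have hFB' : F -ᵥ B = -(E -ᵥ B) := by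
        rw [← ht, ht1]; simp
      have hEBF : ∠ E B F = π := by
        show InnerProductGeometry.angle (E -ᵥ B) (F -ᵥ B) = π
        rw [hFB']
        exact InnerProductGeometry.angle_self_neg_of_nonzero (vsub_ne_zero.2 hBneE.symm)
      have hγ : γ = 0 := by rw [hEBF] at h5; linarith
      have hsum := EuclideanGeometry.angle_add_angle_eq_pi_of_angle_eq_pi A hEBF
      have hABE : ∠ A B E = α := by rw [EuclideanGeometry.angle_comm]; exact h2
      have hABF : ∠ A B F = π - α := by rw [hABE] at hsum; linarith
      have hlc2 := EuclideanGeometry.law_cos A B F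
      rw [hABF, Real.cos_pi_sub, dist_comm F B, hBF, hdAB] at hlc2
      rw [sq, hlc2, hγ, show α + 2 * (0:ℝ) = α by ring]
      ring
  · -- F not on line BE
    have hBL : B ∈ line[ℝ, B, E] := left_mem_affineSpan_pair ℝ B E
    have hEL : E ∈ line[ℝ, B, E] := right_mem_affineSpan_pair ℝ B E
    by_cases hAL : A ∈ line[ℝ, B, E]
    · -- A on line BE: E must be the midpoint of A B; contradiction with hEF
      exfalso
      have hA' : (A -ᵥ B) +ᵥ B ∈ line[ℝ, B, E] := by rwa [vsub_vadd]
      obtain ⟨t, ht⟩ := vadd_left_mem_affineSpan_pair.mp hA'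
      have hnormEB : ‖E -ᵥ B‖ = 1 := by
        have h' : dist E B = 1 := by rw [dist_comm]; exact hBEd
        rwa [dist_eq_norm_vsub (EuclideanSpace ℝ (Fin 2))] at h'
      have hAEvec : A -ᵥ E = (t - 1) • (E -ᵥ B) := by
        rw [sub_smul, one_smul, ht, ← vsub_sub_vsub_cancel_right A E B]
      have habs : |t - 1| = 1 := by
        have h' : ‖A -ᵥ E‖ = 1 := by
          rwa [← dist_eq_norm_vsub (EuclideanSpace ℝ (Fin 2))]
        rw [hAEvec, norm_smul, hnormEB, mul_one, Real.norm_eq_abs] at h'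
        exact h'
      have ht2 : t = 2 := by
        rcases (abs_eq (by norm_num : (0:ℝ) ≤ 1)).mp habs with h' | h'
        · linarith
        · exfalso
          have ht0 : t = 0 := by linarith
          rw [ht0, zero_smul] at ht
          exact hABeq (vsub_eq_zero_iff_eq.mp ht.symm)
      have hE2' : (2:ℝ) • (E - B) = A - B := by
        rw [ht2] at ht
        simpa [vsub_eq_sub] using ht
      have hE : E = (1/2:ℝ) • A + (1/2:ℝ) • B := by
        apply smul_right_injective (EuclideanSpace ℝ (Fin 2)) (two_ne_zero (α := ℝ))
        have h3' : (2:ℝ) • E = (A - B) + (2:ℝ) • B :=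
          eq_add_of_sub_eq (by rw [← smul_sub]; exact hE2')
        show (2:ℝ) • E = (2:ℝ) • ((1/2:ℝ) • A + (1/2:ℝ) • B)
        rw [h3']
        module
      have hABsub : line[ℝ, A, B] ≤ line[ℝ, B, E] :=
        affineSpan_le.mpr (Set.insert_subset_iff.mpr
          ⟨hAL, Set.singleton_subset_iff.mpr hBL⟩)
      have hFAB : F ∉ line[ℝ, A, B] := fun hh => hFL (hABsub hh)
      have hNC' : ¬ Collinear ℝ ({F, A, B} : Set E2) := fun hc =>
        hFAB (hc.mem_affineSpan_of_mem_of_ne (by simp) (by simp) (by simp) hABeq)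
      obtain ⟨b', hb'⟩ := exists_triBasis hNC'
      have hu_seg : (1/2:ℝ) • E + (1/2:ℝ) • F ∈ segment ℝ E F :=
        ⟨1/2, 1/2, by norm_num, by norm_num, by norm_num, rfl⟩
      have hu_eq : (1/2:ℝ) • E + (1/2:ℝ) • F
          = (1/2:ℝ) • F + (1/4:ℝ) • A + (1/4:ℝ) • B := by
        rw [hE]; module
      have hu_int : (1/2:ℝ) • E + (1/2:ℝ) • F
          ∈ interior (convexHull ℝ ({A, B, E, F} : Set E2)) := by
        refine mem_interior_of_coords hb' (fun i => ?_) ?_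
        · rw [hu_eq, coords_of_combo hb' (by norm_num)]
          fin_cases i <;> norm_num
        · intro x hx
          simp only [Set.mem_insert_iff, Set.mem_singleton_iff] at hx ⊢
          tauto
      exact Set.disjoint_left.mp disjoint_interior_frontier hu_int (hEF hu_seg)
    · -- main case
      have hAneB : A ≠ B := hABeq
      have hNC : ¬ Collinear ℝ ({A, B, E} : Set E2) := fun hc =>
        hAL (hc.mem_affineSpan_of_mem_of_ne (by simp) (by simp) (by simp) hBneE)
      obtain ⟨b, hb⟩ := exists_triBasis hNC
      have hcA : (b).coord 0 A = 1 := by simpa using basis_coord hb 0 0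
      have hcB : (b).coord 0 B = 0 := by simpa using basis_coord hb 0 1
      have hcE : (b).coord 0 E = 0 := by simpa using basis_coord hb 0 2
      have hc1B : (b).coord 1 B = 1 := by simpa using basis_coord hb 1 1
      have hc1E : (b).coord 1 E = 0 := by simpa using basis_coord hb 1 2
      have hc2B : (b).coord 2 B = 0 := by simpa using basis_coord hb 2 1
      have hc2E : (b).coord 2 E = 1 := by simpa using basis_coord hb 2 2
      rcases lt_trichotomy ((b).coord 0 F) 0 with hneg | hzero | hpos
      · -- A and F on strict opposite sides of line BE : contradiction
        exfalso
        set c0 := (b).coord 0 F with hc0d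
        set c1 := (b).coord 1 F with hc1d
        set c2 := (b).coord 2 F with hc2d
        have hDpos : (0:ℝ) < 1 + |c1| + |c2| := by positivity
        set ε : ℝ := 1 / (2 * (1 + |c1| + |c2|)) with hεd
        have hεpos : 0 < ε := by positivity
        have hεD : ε * (1 + |c1| + |c2|) = 1 / 2 := by
          rw [hεd]; field_simp
        have hzc : ∀ i, (b).coord i
            ((1+ε) • ((1/2:ℝ) • B + (1/2:ℝ) • E) + (-ε) • F)
            = (1+ε) * ((1/2) * ((b).coord i B)
              + (1/2) * ((b).coord i E))
              + (-ε) * ((b).coord i F) := by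
          intro i
          rw [Convex.combo_affine_apply (by ring : (1+ε) + (-ε) = 1),
            Convex.combo_affine_apply (by norm_num : (1/2:ℝ) + (1/2:ℝ) = 1)]
          simp only [smul_eq_mul]
        have hz0 : 0 < (b).coord 0
            ((1+ε) • ((1/2:ℝ) • B + (1/2:ℝ) • E) + (-ε) • F) := by
          rw [hzc 0, hcB, hcE, ← hc0d]
          have : (1+ε) * ((1/2) * 0 + (1/2) * 0) + (-ε) * c0 = ε * (-c0) := by ring
          rw [this]
          exact mul_pos hεpos (by linarith)
        have hz1 : 0 < (b).coord 1
            ((1+ε) • ((1/2:ℝ) • B + (1/2:ℝ) • E) + (-ε) • F) := by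
          rw [hzc 1, hc1B, hc1E, ← hc1d]
          nlinarith [mul_le_mul_of_nonneg_left (le_abs_self c1) hεpos.le,
            mul_nonneg hεpos.le (abs_nonneg c2), hεD, hεpos]
        have hz2 : 0 < (b).coord 2
            ((1+ε) • ((1/2:ℝ) • B + (1/2:ℝ) • E) + (-ε) • F) := by
          rw [hzc 2, hc2B, hc2E, ← hc2d]
          nlinarith [mul_le_mul_of_nonneg_left (le_abs_self c2) hεpos.le,
            mul_nonneg hεpos.le (abs_nonneg c1), hεD, hεpos]
        have hz_int : (1+ε) • ((1/2:ℝ) • B + (1/2:ℝ) • E) + (-ε) • F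
            ∈ interior (convexHull ℝ ({A, B, E, F} : Set E2)) := by
          refine mem_interior_of_coords hb (fun i => ?_) ?_
          · fin_cases i
            · exact hz0
            · exact hz1
            · exact hz2
          · intro x hx
            simp only [Set.mem_insert_iff, Set.mem_singleton_iff] at hx ⊢
            tauto
        have hFhull : F ∈ convexHull ℝ ({A, B, E, F} : Set E2) :=
          subset_convexHull _ _ (by simp)
        have hMopen : (1/2:ℝ) • B + (1/2:ℝ) • E
            ∈ openSegment ℝ ((1+ε) • ((1/2:ℝ) • B + (1/2:ℝ) • E) + (-ε) • F) F := by
          refine ⟨1/(1+ε), ε/(1+ε), by positivity, by positivity, ?_, ?_⟩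
          · field_simp
          · have hne : (1:ℝ) + ε ≠ 0 := by positivity
            match_scalars <;> field_simp <;> ring
        have hMint := (convex_convexHull ℝ ({A, B, E, F} : Set E2)).openSegment_interior_self_subset_interior
          hz_int hFhull hMopen
        have hMseg : (1/2:ℝ) • B + (1/2:ℝ) • E ∈ segment ℝ B E :=
          ⟨1/2, 1/2, by norm_num, by norm_num, by norm_num, rfl⟩
        exact Set.disjoint_left.mp disjoint_interior_frontier hMint (hBE hMseg)
      · exact absurd ((coord_zero_iff_mem hb F).mp hzero) hFL
      · -- A and F on the same side of line BE : the generic configuration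
        set c0 := (b).coord 0 F with hc0d
        have hp2 : (b).coord 0 ((-c0) • (A -ᵥ B) +ᵥ F) = 0 := by
          rw [AffineMap.map_vadd, LinearMap.map_smul, AffineMap.linearMap_vsub, hcA, hcB, ← hc0d]
          simp
        have hp2L : (-c0) • (A -ᵥ B) +ᵥ F ∈ line[ℝ, B, E] :=
          (coord_zero_iff_mem hb _).mp hp2
        have hss0 := AffineSubspace.sSameSide_smul_vsub_vadd_right hAL hBL hp2L hpos
        have hFeq : c0 • (A -ᵥ B) +ᵥ ((-c0) • (A -ᵥ B) +ᵥ F) = F := by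
          rw [vadd_vadd, ← add_smul]
          simp
        rw [hFeq] at hss0
        have hsgn : (∡ B F E).sign = (∡ B A E).sign :=
          AffineSubspace.SSameSide.oangle_sign_eq hBL hEL hss0
        have hsgn' : (∡ E B F).sign = (∡ E B A).sign := by
          rw [← oangle_rotate_sign E B F, ← oangle_rotate_sign E B A]
          exact hsgn
        have hsne : (∡ E B A).sign ≠ 0 := by
          intro h0
          rw [EuclideanGeometry.oangle_sign_eq_zero_iff_collinear] at h0
          exact hAL (h0.mem_affineSpan_of_mem_of_ne (by simp) (by simp) (by simp) hBneE)
        have hcos : Real.cos (∠ A B F) = -Real.cos (α + 2 * γ) := by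
          have hbase : ∀ θ : ℝ, ∡ A B F = (θ : Real.Angle) →
              Real.cos (∠ A B F) = Real.cos θ := by
            intro θ hθ
            rw [EuclideanGeometry.angle_eq_abs_oangle_toReal hAneB hFneB, Real.cos_abs,
              Real.Angle.cos_toReal, hθ, Real.Angle.cos_coe]
          cases h' : (∡ E B A).sign with
          | zero => exact absurd h' hsne
          | pos =>
            have hEBA : ∡ E B A = (α : Real.Angle) := by
              rw [← h2]; exact EuclideanGeometry.oangle_eq_angle_of_sign_eq_one h'
            have hEBF : ∡ E B F = ((π - 2 * γ : ℝ) : Real.Angle) := by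
              rw [← h5]
              exact EuclideanGeometry.oangle_eq_angle_of_sign_eq_one (by rw [hsgn']; exact h')
            have hABF : ∡ A B F = ((π - 2 * γ - α : ℝ) : Real.Angle) := by
              rw [← EuclideanGeometry.oangle_add hAneB hBneE.symm hFneB,
                EuclideanGeometry.oangle_rev E B A, hEBA, hEBF,
                show (π - 2 * γ - α : ℝ) = -α + (π - 2 * γ) by ring,
                Real.Angle.coe_add, Real.Angle.coe_neg]
            rw [hbase _ hABF, show (π - 2 * γ - α : ℝ) = π - (α + 2 * γ) by ring,
              Real.cos_pi_sub]
          | neg =>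
            have hEBA : ∡ E B A = -((α : ℝ) : Real.Angle) := by
              rw [← h2]
              exact EuclideanGeometry.oangle_eq_neg_angle_of_sign_eq_neg_one h'
            have hEBF : ∡ E B F = -(((π - 2 * γ) : ℝ) : Real.Angle) := by
              rw [← h5]
              exact EuclideanGeometry.oangle_eq_neg_angle_of_sign_eq_neg_one
                (by rw [hsgn']; exact h')
            have hABF : ∡ A B F = ((α - (π - 2 * γ) : ℝ) : Real.Angle) := by
              rw [← EuclideanGeometry.oangle_add hAneB hBneE.symm hFneB,
                EuclideanGeometry.oangle_rev E B A, hEBA, hEBF, neg_neg,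
                show (α - (π - 2 * γ) : ℝ) = α + -(π - 2 * γ) by ring,
                Real.Angle.coe_add, Real.Angle.coe_neg]
            rw [hbase _ hABF, show (α - (π - 2 * γ) : ℝ) = (α + 2 * γ) - π by ring,
              Real.cos_sub_pi]
        have hlc2 := EuclideanGeometry.law_cos A B F
        rw [hcos, dist_comm F B, hBF, hdAB] at hlc2
        rw [sq, hlc2]
        ring
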